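/- Let p be a prime and ℓ ≥ 1 an integer. For each integer j with 1 ≤ j ≤ ℓ and p ∤ j, let s_j be the smallest positive integer such that j·p^{s_j} > ℓ. Then every monic polynomial f ∈ 𝔽_p[x] is type-II equivalent to the product Π_{1 ≤ j ≤ ℓ, p ∤ j} (x^j + 1)^{e_j} for exactly one tuple of exponents (e_j) with 0 ≤ e_j < p^{s_j} for each j. In other words, the type-II equivalence classes of the polynomials x^j + 1 (for 1 ≤ j ≤ ℓ with p ∤ j) generate the group of type-II equivalence classes as a direct product of cyclic groups of orders p^{s_j}. -/

import Mathlib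

open Polynomial

/-- Two monic polynomials are type-II equivalent if their reversals agree
modulo `X^(ℓ+1)`. -/
def TypeIIEquiv {R : Type*} [CommRing R] (ℓ : ℕ) (f g : Polynomial R) : Prop :=
  (X ^ (ℓ + 1) : Polynomial R) ∣ (f.reverse - g.reverse)

variable {p : ℕ} [Fact p.Prime]

private lemma freshman (n k : ℕ) :
    ((1 + X ^ n) ^ p ^ k : (ZMod p)[X]) = 1 + X ^ (n * p ^ k) := by
  rw [add_pow_char_pow, one_pow, ← pow_mul]

private lemma dvd_sub_mul' {R : Type*} [CommRing R] {d a b c e : R}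
    (h1 : d ∣ a - b) (h2 : d ∣ c - e) : d ∣ a * c - b * e := by
  have : a * c - b * e = a * (c - e) + (a - b) * e := by ring
  rw [this]
  exact dvd_add (h2.mul_left a) (h1.mul_right e)

private lemma dvd_sub_prod {R : Type*} [CommRing R] {d : R} {ι : Type*} (t : Finset ι)
    (a b : ι → R) (h : ∀ i ∈ t, d ∣ a i - b i) :
    d ∣ ∏ i ∈ t, a i - ∏ i ∈ t, b i := by
  classical
  induction t using Finset.induction_on with
  | empty => simp
  | insert _ _ hx ih =>
    rw [Finset.prod_insert hx, Finset.prod_insert hx]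
    exact dvd_sub_mul' (h _ (Finset.mem_insert_self _ _))
      (ih fun i hi => h i (Finset.mem_insert_of_mem hi))

private lemma dvd_pow_sub_one (n c : ℕ) :
    (X : (ZMod p)[X]) ^ n ∣ (1 + X ^ n) ^ c - 1 := by
  induction c with
  | zero => simp
  | succ c ih =>
    have h : (1 + X ^ n : (ZMod p)[X]) ^ (c + 1) - 1
        = ((1 + X ^ n) ^ c - 1) * (1 + X ^ n) + X ^ n := by ring
    rw [h]
    exact dvd_add (ih.mul_right _) dvd_rfl

private lemma trunc_pow (m c : ℕ) :
    (X : (ZMod p)[X]) ^ (m + 2) ∣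
      (1 + X ^ (m + 1)) ^ c - (1 + C ((c : ℕ) : ZMod p) * X ^ (m + 1)) := by
  induction c with
  | zero => simp
  | succ c ih =>
    obtain ⟨h, hh⟩ := ih
    have hc : ((1 + X ^ (m + 1)) ^ c : (ZMod p)[X])
        = X ^ (m + 2) * h + (1 + C ((c : ℕ) : ZMod p) * X ^ (m + 1)) := by
      rw [← hh]; ring
    refine ⟨h * (1 + X ^ (m + 1)) + C ((c : ℕ) : ZMod p) * X ^ m, ?_⟩
    rw [pow_succ, hc, Nat.cast_succ, map_add, map_one]
    ring

private lemma trunc_pow' (m c : ℕ) (hm : 1 ≤ m) :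
    (X : (ZMod p)[X]) ^ (m + 1) ∣ (1 + X ^ m) ^ c - (1 + C ((c : ℕ) : ZMod p) * X ^ m) := by
  obtain ⟨m', rfl⟩ : ∃ m', m = m' + 1 := ⟨m - 1, by omega⟩
  exact trunc_pow m' c

private lemma coeff_eq_of_dvd {m : ℕ} {A B : (ZMod p)[X]}
    (h : (X : (ZMod p)[X]) ^ (m + 1) ∣ A - B) : A.coeff m = B.coeff m := by
  obtain ⟨h', hh⟩ := h
  have h0 : (A - B).coeff m = 0 := by
    rw [hh, mul_comm, Polynomial.coeff_mul_X_pow']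
    simp
  rw [Polynomial.coeff_sub, sub_eq_zero] at h0
  exact h0

private lemma Icc_insert {m L : ℕ} (h : m ≤ L) :
    Finset.Icc m L = insert m (Finset.Icc (m + 1) L) := by
  ext n; simp only [Finset.mem_Icc, Finset.mem_insert]; omega

private lemma prod_trunc (ℓ : ℕ) (m : ℕ) (hm : 1 ≤ m) (hml : m ≤ ℓ) (c : ℕ → ℕ) :
    (X : (ZMod p)[X]) ^ (m + 1) ∣
      (∏ n ∈ Finset.Icc m ℓ, (1 + X ^ n) ^ c n) - (1 + C ((c m : ℕ) : ZMod p) * X ^ m) := by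
  obtain ⟨m', rfl⟩ : ∃ m', m = m' + 1 := ⟨m - 1, by omega⟩
  rw [Icc_insert hml, Finset.prod_insert (by simp)]
  have h1 : (X : (ZMod p)[X]) ^ (m' + 1 + 1) ∣
      (1 + X ^ (m' + 1)) ^ c (m' + 1) - (1 + C ((c (m' + 1) : ℕ) : ZMod p) * X ^ (m' + 1)) :=
    trunc_pow m' (c (m' + 1))
  have h2 : (X : (ZMod p)[X]) ^ (m' + 1 + 1) ∣
      (∏ n ∈ Finset.Icc (m' + 1 + 1) ℓ, (1 + X ^ n) ^ c n) - 1 := by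
    have := dvd_sub_prod (d := (X : (ZMod p)[X]) ^ (m' + 1 + 1))
      (Finset.Icc (m' + 1 + 1) ℓ) (fun n => (1 + X ^ n) ^ c n) (fun _ => 1)
      (fun n hn => dvd_trans (pow_dvd_pow _ (Finset.mem_Icc.1 hn).1) (dvd_pow_sub_one n (c n)))
    simpa using this
  have := dvd_sub_mul' h1 h2
  rwa [mul_one] at this

private lemma coeff_prod_trunc (ℓ : ℕ) (m : ℕ) (hm : 1 ≤ m) (hml : m ≤ ℓ) (c : ℕ → ℕ) :
    (∏ n ∈ Finset.Icc m ℓ, ((1 : (ZMod p)[X]) + X ^ n) ^ c n).coeff m = ((c m : ℕ) : ZMod p) := by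
  rw [coeff_eq_of_dvd (prod_trunc ℓ m hm hml c)]
  rw [Polynomial.coeff_add, Polynomial.coeff_one, Polynomial.coeff_C_mul, Polynomial.coeff_X_pow]
  have : m ≠ 0 := by omega
  simp [this]

private lemma cancel_unit {u a : (ZMod p)[X]} (N : ℕ) (hu : u.coeff 0 ≠ 0)
    (h : (X : (ZMod p)[X]) ^ N ∣ u * a) : (X : (ZMod p)[X]) ^ N ∣ a := by
  have hx : ¬ (X : (ZMod p)[X]) ∣ u := by rwa [Polynomial.X_dvd_iff]
  exact ((Polynomial.prime_X.coprime_iff_not_dvd.2 hx).pow_left).dvd_of_dvd_mul_left h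

private lemma natCast_inj_of_lt {a b : ℕ} (ha : a < p) (hb : b < p)
    (h : (a : ZMod p) = b) : a = b := by
  have h1 := ZMod.val_cast_of_lt ha
  have h2 := ZMod.val_cast_of_lt hb
  rw [h] at h1; omega

private lemma coeff_zero_one_add_pow (m c : ℕ) (hm : 1 ≤ m) :
    (((1 : (ZMod p)[X]) + X ^ m) ^ c).coeff 0 ≠ 0 := by
  have : (((1 : (ZMod p)[X]) + X ^ m) ^ c).coeff 0 = 1 := by
    rw [Polynomial.coeff_zero_eq_eval_zero]
    simp [zero_pow (by omega : m ≠ 0)]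
  rw [this]; exact one_ne_zero

private lemma digits_unique (ℓ : ℕ) (d : ℕ) : ∀ m, 1 ≤ m → ℓ + 1 ≤ m + d →
    ∀ c c' : ℕ → ℕ, (∀ n, c n < p) → (∀ n, c' n < p) →
    ((X : (ZMod p)[X]) ^ (ℓ + 1) ∣
      (∏ n ∈ Finset.Icc m ℓ, (1 + X ^ n) ^ c n) -
      (∏ n ∈ Finset.Icc m ℓ, (1 + X ^ n) ^ c' n)) →
    ∀ n ∈ Finset.Icc m ℓ, c n = c' n := by
  induction d with
  | zero =>
    intro m hm hle c c' _ _ _ n hn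
    rw [Finset.mem_Icc] at hn; omega
  | succ d ih =>
    intro m hm hle c c' hc hc' hdvd n hn
    rw [Finset.mem_Icc] at hn
    have hml : m ≤ ℓ := le_trans hn.1 hn.2
    -- the m-th digits agree
    have hdvd' : (X : (ZMod p)[X]) ^ (m + 1) ∣
        (∏ n ∈ Finset.Icc m ℓ, (1 + X ^ n) ^ c n) -
        (∏ n ∈ Finset.Icc m ℓ, (1 + X ^ n) ^ c' n) :=
      dvd_trans (pow_dvd_pow _ (by omega)) hdvd
    have hcm : c m = c' m := by
      refine natCast_inj_of_lt (hc m) (hc' m) ?_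
      rw [← coeff_prod_trunc ℓ m hm hml c, ← coeff_prod_trunc ℓ m hm hml c',
        coeff_eq_of_dvd hdvd']
    -- cancel the common factor
    have hrw : ∀ e : ℕ → ℕ, (∏ n ∈ Finset.Icc m ℓ, ((1 : (ZMod p)[X]) + X ^ n) ^ e n)
        = (1 + X ^ m) ^ e m * ∏ n ∈ Finset.Icc (m + 1) ℓ, (1 + X ^ n) ^ e n := by
      intro e; rw [Icc_insert hml, Finset.prod_insert (by simp)]
    have hdvd2 : (X : (ZMod p)[X]) ^ (ℓ + 1) ∣
        ((1 + X ^ m) ^ c' m) * ((∏ n ∈ Finset.Icc (m + 1) ℓ, (1 + X ^ n) ^ c n) -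
          (∏ n ∈ Finset.Icc (m + 1) ℓ, (1 + X ^ n) ^ c' n)) := by
      rw [mul_sub]
      rw [hrw c, hrw c', hcm] at hdvd
      exact hdvd
    have hdvd3 := cancel_unit (ℓ + 1) (coeff_zero_one_add_pow m (c' m) hm) hdvd2
    have hrest := ih (m + 1) (by omega) (by omega) c c' hc hc' hdvd3
    rcases eq_or_lt_of_le hn.1 with h | h
    · rw [← h]; exact hcm
    · exact hrest n (Finset.mem_Icc.2 ⟨h, hn.2⟩)

private lemma digits_exist (ℓ : ℕ) (d : ℕ) : ∀ m, 1 ≤ m → ℓ + 1 ≤ m + d →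
    ∀ g : (ZMod p)[X], (X : (ZMod p)[X]) ^ m ∣ g - 1 →
    ∃ c : ℕ → ℕ, (∀ n, c n < p) ∧ (∀ n, n ∉ Finset.Icc m ℓ → c n = 0) ∧
      (X : (ZMod p)[X]) ^ (ℓ + 1) ∣ g - ∏ n ∈ Finset.Icc m ℓ, (1 + X ^ n) ^ c n := by
  have hp1 : 1 < p := (Fact.out : p.Prime).one_lt
  induction d with
  | zero =>
    intro m hm hle g hg
    refine ⟨fun _ => 0, fun _ => by show 0 < p; omega, fun _ _ => rfl, ?_⟩
    have he : Finset.Icc m ℓ = ∅ := by rw [Finset.Icc_eq_empty_iff]; omega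
    rw [he, Finset.prod_empty]
    exact dvd_trans (pow_dvd_pow _ (by omega : ℓ + 1 ≤ m)) hg
  | succ d ih =>
    intro m hm hle g hg
    by_cases hml : ℓ + 1 ≤ m
    · refine ⟨fun _ => 0, fun _ => by show 0 < p; omega, fun _ _ => rfl, ?_⟩
      have he : Finset.Icc m ℓ = ∅ := by rw [Finset.Icc_eq_empty_iff]; omega
      rw [he, Finset.prod_empty]
      exact dvd_trans (pow_dvd_pow _ hml) hg
    push_neg at hml
    have hml' : m ≤ ℓ := by omega
    set a : ZMod p := g.coeff m with ha
    set cm : ℕ := a.val with hcm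
    have hcmlt : cm < p := ZMod.val_lt a
    have hcast : ((cm : ℕ) : ZMod p) = a := ZMod.natCast_rightInverse a
    set t : ℕ := ℓ + 1 with htdef
    have hpt : p ^ t ≥ p := Nat.le_self_pow (by omega) p
    have hmpt : ℓ + 1 ≤ m * p ^ t := by
      have h2 : ℓ + 1 < 2 ^ t := Nat.lt_two_pow_self (n := t)
      have h3 : 2 ^ t ≤ p ^ t := Nat.pow_le_pow_left hp1 t
      have h4 : p ^ t ≤ m * p ^ t := Nat.le_mul_of_pos_left _ (by omega)
      omega
    set N : ℕ := p ^ t - cm with hNdef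
    have hNcast : ((N : ℕ) : ZMod p) = - a := by
      rw [hNdef, Nat.cast_sub (by omega), Nat.cast_pow, ZMod.natCast_self,
        zero_pow (by omega : t ≠ 0), zero_sub, hcast]
    -- step A
    have hg1 : (X : (ZMod p)[X]) ^ (m + 1) ∣ g - (1 + C a * X ^ m) := by
      obtain ⟨h, hh⟩ := hg
      have hh' : g - 1 = X ^ m * h := hh
      have hcoeff : h.coeff 0 = a := by
        have e1 : (g - 1).coeff m = a := by
          rw [Polynomial.coeff_sub, Polynomial.coeff_one, if_neg (by omega : ¬ m = 0)]
          simp [ha]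
        have e2 : ((X : (ZMod p)[X]) ^ m * h).coeff m = h.coeff 0 := by
          have := Polynomial.coeff_X_pow_mul h m 0
          rwa [zero_add] at this
        rw [hh', e2] at e1
        exact e1
      have hfac : g - (1 + C a * X ^ m) = X ^ m * (h - C a) := by
        rw [mul_sub, ← hh']; ring
      rw [hfac, pow_succ]
      refine mul_dvd_mul dvd_rfl ?_
      rw [Polynomial.X_dvd_iff, Polynomial.coeff_sub, hcoeff, Polynomial.coeff_C]
      simp
    -- step C : g * (1 + X^m)^N ≡ 1 mod X^(m+1)
    have hgN : (X : (ZMod p)[X]) ^ (m + 1) ∣ g * (1 + X ^ m) ^ N - 1 := by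
      have h1 := dvd_sub_mul' hg1 (trunc_pow' m N hm)
      have h2 : (X : (ZMod p)[X]) ^ (m + 1) ∣
          (1 + C a * X ^ m) * (1 + C ((N : ℕ) : ZMod p) * X ^ m) - 1 := by
        rw [hNcast, map_neg]
        have hA : ((1 : (ZMod p)[X]) + C a * X ^ m) * (1 + (- C a) * X ^ m) - 1
            = -(C a * C a) * (X ^ m * X ^ m) := by ring
        rw [hA, ← pow_add]
        exact Dvd.dvd.mul_left (pow_dvd_pow _ (by omega)) _
      have := dvd_add h1 h2
      rwa [sub_add_sub_cancel] at this
    -- step D : induction hypothesis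
    obtain ⟨c', hc'lt, hc'supp, hc'dvd⟩ := ih (m + 1) (by omega) (by omega) (g * (1 + X ^ m) ^ N) hgN
    -- step E
    have hkey : (X : (ZMod p)[X]) ^ (ℓ + 1) ∣ g - (1 + X ^ m) ^ cm * (g * (1 + X ^ m) ^ N) := by
      have hcmN : cm + N = p ^ t := by omega
      have he : (1 + X ^ m : (ZMod p)[X]) ^ cm * (g * (1 + X ^ m) ^ N)
          = g * (1 + X ^ (m * p ^ t)) := by
        rw [← freshman m t, ← hcmN, pow_add]; ring
      rw [he]
      have : g - g * (1 + X ^ (m * p ^ t) : (ZMod p)[X]) = -(g * X ^ (m * p ^ t)) := by ring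
      rw [this]
      exact (Dvd.dvd.mul_left (pow_dvd_pow _ hmpt) g).neg_right
    -- assemble
    refine ⟨fun n => if n = m then cm else c' n, ?_, ?_, ?_⟩
    · intro n; dsimp only; split <;> [exact hcmlt; exact hc'lt n]
    · intro n hn
      have hnm : n ≠ m := by rintro rfl; exact hn (Finset.mem_Icc.2 ⟨le_refl n, hml'⟩)
      dsimp only; rw [if_neg hnm]
      exact hc'supp n (by rw [Finset.mem_Icc] at *; omega)
    · have hprod : (∏ n ∈ Finset.Icc m ℓ, ((1 : (ZMod p)[X]) + X ^ n) ^ (if n = m then cm else c' n))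
          = (1 + X ^ m) ^ cm * ∏ n ∈ Finset.Icc (m + 1) ℓ, (1 + X ^ n) ^ c' n := by
        rw [Icc_insert hml', Finset.prod_insert (by simp), if_pos rfl]
        congr 1
        refine Finset.prod_congr rfl fun n hn => ?_
        rw [Finset.mem_Icc] at hn
        rw [if_neg (by omega)]
      rw [hprod]
      have hsplit : g - (1 + X ^ m : (ZMod p)[X]) ^ cm * ∏ n ∈ Finset.Icc (m + 1) ℓ, (1 + X ^ n) ^ c' n
          = (g - (1 + X ^ m) ^ cm * (g * (1 + X ^ m) ^ N))
            + (1 + X ^ m) ^ cm *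
              ((g * (1 + X ^ m) ^ N) - ∏ n ∈ Finset.Icc (m + 1) ℓ, (1 + X ^ n) ^ c' n) := by
        ring
      rw [hsplit]
      exact dvd_add hkey (hc'dvd.mul_left _)

private lemma sum_digits_lt {p : ℕ} (hp1 : 1 < p) (s' : ℕ) (c : ℕ → ℕ) (h : ∀ k, c k < p) :
    ∑ k ∈ Finset.range s', c k * p ^ k < p ^ s' := by
  obtain ⟨q, rfl⟩ : ∃ q, p = q + 1 := ⟨p - 1, by omega⟩
  induction s' with
  | zero => simp
  | succ s' ih =>
    rw [Finset.sum_range_succ]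
    have h1 : c s' * (q + 1) ^ s' ≤ q * (q + 1) ^ s' :=
      Nat.mul_le_mul_right _ (by have := h s'; omega)
    have h2 : (q + 1) ^ (s' + 1) = q * (q + 1) ^ s' + (q + 1) ^ s' := by ring
    omega

private lemma sum_digits_eq {p : ℕ} (hp1 : 1 < p) (s' : ℕ) : ∀ e : ℕ, e < p ^ s' →
    ∑ k ∈ Finset.range s', (e / p ^ k % p) * p ^ k = e := by
  induction s' with
  | zero =>
    intro e he
    rw [pow_zero] at he
    interval_cases e
    simp
  | succ s' ih =>
    intro e he
    rw [Finset.sum_range_succ']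
    have hdiv : e / p < p ^ s' := by
      rw [pow_succ] at he
      exact Nat.div_lt_of_lt_mul (by rwa [mul_comm] at he)
    have key : ∀ k, (e / p ^ (k + 1) % p) * p ^ (k + 1) = (((e / p) / p ^ k % p) * p ^ k) * p := by
      intro k
      rw [Nat.div_div_eq_div_mul, mul_comm p (p ^ k), pow_succ, mul_assoc]
    simp_rw [key]
    rw [← Finset.sum_mul, ih (e / p) hdiv]
    simpa using Nat.div_add_mod' e p

private lemma reindex {p : ℕ} (hp : p.Prime) (ℓ : ℕ) (s : ℕ → ℕ)
    (hchar : ∀ j ∈ (Finset.Icc 1 ℓ).filter (fun j => ¬ p ∣ j), ∀ k, (k < s j ↔ j * p ^ k ≤ ℓ))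
    {M : Type*} [CommMonoid M] (F : ℕ → M) :
    ∏ n ∈ Finset.Icc 1 ℓ, F n
      = ∏ j ∈ (Finset.Icc 1 ℓ).filter (fun j => ¬ p ∣ j),
          ∏ k ∈ Finset.range (s j), F (j * p ^ k) := by
  rw [Finset.prod_sigma']
  refine Finset.prod_nbij' (fun n => ⟨ordCompl[p] n, n.factorization p⟩)
    (fun x => x.1 * p ^ x.2) ?_ ?_ ?_ ?_ ?_
  · -- forward membership
    intro n hn
    rw [Finset.mem_Icc] at hn
    have hn0 : n ≠ 0 := by omega
    have hj1 : 1 ≤ ordCompl[p] n := Nat.ordCompl_pos p hn0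
    have hjle : ordCompl[p] n ≤ n := Nat.ordCompl_le n p
    have hjS : ordCompl[p] n ∈ (Finset.Icc 1 ℓ).filter (fun j => ¬ p ∣ j) := by
      rw [Finset.mem_filter, Finset.mem_Icc]
      exact ⟨⟨hj1, le_trans hjle hn.2⟩, Nat.not_dvd_ordCompl hp hn0⟩
    rw [Finset.mem_sigma]
    refine ⟨hjS, ?_⟩
    rw [Finset.mem_range, hchar _ hjS]
    rw [mul_comm, Nat.ordProj_mul_ordCompl_eq_self n p]
    exact hn.2
  · -- backward membership
    intro x hx
    rw [Finset.mem_sigma, Finset.mem_range] at hx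
    obtain ⟨hxS, hxk⟩ := hx
    have h1 : 1 ≤ x.1 := by
      have := (Finset.mem_Icc.1 (Finset.mem_filter.1 hxS).1).1; exact this
    rw [Finset.mem_Icc]
    constructor
    · have : 1 ≤ p ^ x.2 := Nat.one_le_pow _ _ hp.pos
      exact Nat.one_le_iff_ne_zero.2 (by positivity)
    · exact (hchar _ hxS x.2).1 hxk
  · -- left inverse
    intro n hn
    show ordCompl[p] n * p ^ n.factorization p = n
    rw [mul_comm]
    exact Nat.ordProj_mul_ordCompl_eq_self n p
  · -- right inverse
    intro x hx
    rw [Finset.mem_sigma, Finset.mem_range] at hx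
    obtain ⟨hxS, _⟩ := hx
    obtain ⟨hxIcc, hxnd⟩ := Finset.mem_filter.1 hxS
    have hx1 : x.1 ≠ 0 := by
      have := (Finset.mem_Icc.1 hxIcc).1; omega
    have hfac : (x.1 * p ^ x.2).factorization p = x.2 := by
      rw [Nat.factorization_mul hx1 (pow_ne_zero _ hp.pos.ne'), Finsupp.add_apply,
        Nat.Prime.factorization_pow hp, Finsupp.single_eq_same,
        Nat.factorization_eq_zero_of_not_dvd hxnd, zero_add]
    have hcompl : ordCompl[p] (x.1 * p ^ x.2) = x.1 := by
      rw [hfac, Nat.mul_div_cancel _ (pow_pos hp.pos _)]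
    exact Sigma.ext hcompl (heq_of_eq hfac)
  · intro n hn
    show F n = F (ordCompl[p] n * p ^ n.factorization p)
    rw [mul_comm, Nat.ordProj_mul_ordCompl_eq_self n p]

private lemma reverse_one' : reverse (1 : (ZMod p)[X]) = 1 := by
  have := Polynomial.reflect_monomial (R := ZMod p) 0 0
  simpa [Polynomial.reverse] using this

private lemma reverse_pow' (f : (ZMod p)[X]) (n : ℕ) :
    reverse (f ^ n) = reverse f ^ n := by
  induction n with
  | zero => simpa using reverse_one'
  | succ n ih => rw [pow_succ, Polynomial.reverse_mul_of_domain, ih, pow_succ]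

private lemma reverse_X_pow_add_one (j : ℕ) :
    reverse ((X : (ZMod p)[X]) ^ j + 1) = X ^ j + 1 := by
  have h1 : ((X : (ZMod p)[X]) ^ j + 1) = X ^ j + C 1 := by rw [map_one]
  have h2 : (C 1 : (ZMod p)[X]) = X ^ 0 := by simp
  rw [Polynomial.reverse, h1, Polynomial.natDegree_X_pow_add_C, h2, Polynomial.reflect_add,
    Polynomial.reflect_monomial, Polynomial.reflect_monomial,
    Polynomial.revAt_le (le_refl j), Polynomial.revAt_le (Nat.zero_le j)]
  simp [add_comm]

private lemma reverse_prod_pow (t : Finset ℕ) (e : ℕ → ℕ) :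
    reverse (∏ j ∈ t, ((X : (ZMod p)[X]) ^ j + 1) ^ e j)
      = ∏ j ∈ t, ((X : (ZMod p)[X]) ^ j + 1) ^ e j := by
  classical
  induction t using Finset.induction_on with
  | empty => simpa using reverse_one'
  | insert _ _ hx ih =>
    rw [Finset.prod_insert hx, Polynomial.reverse_mul_of_domain, ih,
      reverse_pow', reverse_X_pow_add_one]

private lemma ord_facts {p : ℕ} (hp : p.Prime) {j : ℕ} (hj : j ≠ 0) (hnd : ¬ p ∣ j) (k : ℕ) :
    (j * p ^ k).factorization p = k ∧ ordCompl[p] (j * p ^ k) = j := by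
  have hfac : (j * p ^ k).factorization p = k := by
    rw [Nat.factorization_mul hj (pow_ne_zero _ hp.pos.ne'), Finsupp.add_apply,
      Nat.Prime.factorization_pow hp, Finsupp.single_eq_same,
      Nat.factorization_eq_zero_of_not_dvd hnd, zero_add]
  exact ⟨hfac, by rw [hfac, Nat.mul_div_cancel _ (pow_pos hp.pos _)]⟩

/-- bridge : product over `Icc 1 ℓ` of digit powers equals product over `S` -/
private lemma prod_eq {p : ℕ} [Fact p.Prime] (ℓ : ℕ) (s : ℕ → ℕ)
    (hchar : ∀ j ∈ (Finset.Icc 1 ℓ).filter (fun j => ¬ p ∣ j), ∀ k, (k < s j ↔ j * p ^ k ≤ ℓ))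
    (c : ℕ → ℕ) :
    ∏ n ∈ Finset.Icc 1 ℓ, ((1 : (ZMod p)[X]) + X ^ n) ^ c n
      = ∏ j ∈ (Finset.Icc 1 ℓ).filter (fun j => ¬ p ∣ j),
          ((1 : (ZMod p)[X]) + X ^ j) ^ (∑ k ∈ Finset.range (s j), c (j * p ^ k) * p ^ k) := by
  rw [reindex (Fact.out : p.Prime) ℓ s hchar (fun n => ((1 : (ZMod p)[X]) + X ^ n) ^ c n)]
  refine Finset.prod_congr rfl fun j hj => ?_
  rw [← Finset.prod_pow_eq_pow_sum]
  refine Finset.prod_congr rfl fun k _ => ?_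
  rw [← freshman j k, ← pow_mul, mul_comm]

theorem typeII_classes_generated_by_x_pow_j_add_one
    (p : ℕ) [Fact p.Prime] (ℓ : ℕ) (hℓ : 1 ≤ ℓ)
    (s : ℕ → ℕ)
    (hs : ∀ j ∈ (Finset.Icc 1 ℓ).filter (fun j => ¬ p ∣ j),
      0 < s j ∧ ℓ < j * p ^ s j ∧ ∀ s' : ℕ, 0 < s' → ℓ < j * p ^ s' → s j ≤ s')
    (f : Polynomial (ZMod p)) (hf : f.Monic) :
    ∃! e : ℕ → ℕ,
      (∀ j, j ∉ (Finset.Icc 1 ℓ).filter (fun j => ¬ p ∣ j) → e j = 0) ∧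
      (∀ j ∈ (Finset.Icc 1 ℓ).filter (fun j => ¬ p ∣ j), e j < p ^ s j) ∧
      TypeIIEquiv ℓ f
        (∏ j ∈ (Finset.Icc 1 ℓ).filter (fun j => ¬ p ∣ j),
          ((X : Polynomial (ZMod p)) ^ j + 1) ^ e j) := by
  classical
  have hp : p.Prime := Fact.out
  have hp1 : 1 < p := hp.one_lt
  set S := (Finset.Icc 1 ℓ).filter (fun j => ¬ p ∣ j) with hS
  -- characterization of s
  have hchar : ∀ j ∈ S, ∀ k, (k < s j ↔ j * p ^ k ≤ ℓ) := by
    intro j hjS k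
    obtain ⟨hspos, hslt, hmin⟩ := hs j hjS
    obtain ⟨hjIcc, hjnd⟩ := Finset.mem_filter.1 hjS
    rw [Finset.mem_Icc] at hjIcc
    constructor
    · intro hk
      by_contra hgt
      push_neg at hgt
      rcases Nat.eq_zero_or_pos k with rfl | hkpos
      · rw [pow_zero, mul_one] at hgt; omega
      · exact absurd (hmin k hkpos hgt) (by omega)
    · intro hle
      by_contra hk
      push_neg at hk
      have h1 : j * p ^ s j ≤ j * p ^ k :=
        Nat.mul_le_mul_left _ (Nat.pow_le_pow_right hp.pos hk)
      omega
  -- every product in sight can be rewritten with (1 + X^j)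
  have hcomm : ∀ (e : ℕ → ℕ),
      (∏ j ∈ S, ((X : (ZMod p)[X]) ^ j + 1) ^ e j)
        = ∏ j ∈ S, ((1 : (ZMod p)[X]) + X ^ j) ^ e j := by
    intro e; refine Finset.prod_congr rfl fun j _ => by rw [add_comm]
  have hrev : ∀ (e : ℕ → ℕ),
      (∏ j ∈ S, ((X : (ZMod p)[X]) ^ j + 1) ^ e j).reverse
        = ∏ j ∈ S, ((1 : (ZMod p)[X]) + X ^ j) ^ e j := by
    intro e; rw [reverse_prod_pow, hcomm]
  -- the digit function of an exponent vector
  set Dig : (ℕ → ℕ) → ℕ → ℕ :=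
    fun e n => e (ordCompl[p] n) / p ^ (n.factorization p) % p with hDig
  have hDiglt : ∀ e n, Dig e n < p := fun e n => Nat.mod_lt _ hp.pos
  -- bridge : P(e) as a digit product
  have hbridge : ∀ e : ℕ → ℕ, (∀ j ∈ S, e j < p ^ s j) →
      (∏ n ∈ Finset.Icc 1 ℓ, ((1 : (ZMod p)[X]) + X ^ n) ^ Dig e n)
        = ∏ j ∈ S, ((1 : (ZMod p)[X]) + X ^ j) ^ e j := by
    intro e he
    rw [prod_eq ℓ s hchar]
    refine Finset.prod_congr rfl fun j hjS => ?_
    obtain ⟨hjIcc, hjnd⟩ := Finset.mem_filter.1 hjS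
    have hj0 : j ≠ 0 := by have := (Finset.mem_Icc.1 hjIcc).1; omega
    congr 1
    have hd : ∀ k, Dig e (j * p ^ k) = e j / p ^ k % p := by
      intro k
      obtain ⟨h1, h2⟩ := ord_facts hp hj0 hjnd k
      rw [hDig]; dsimp only
      rw [h1, Nat.mul_div_cancel _ (pow_pos hp.pos _)]
    simp_rw [hd]
    exact sum_digits_eq hp1 (s j) (e j) (he j hjS)
  -- digit extraction from congruent products
  have hdigeq : ∀ e e' : ℕ → ℕ,
      ((X : (ZMod p)[X]) ^ (ℓ + 1) ∣
        (∏ n ∈ Finset.Icc 1 ℓ, ((1 : (ZMod p)[X]) + X ^ n) ^ Dig e n) -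
        (∏ n ∈ Finset.Icc 1 ℓ, ((1 : (ZMod p)[X]) + X ^ n) ^ Dig e' n)) →
      ∀ n ∈ Finset.Icc 1 ℓ, Dig e n = Dig e' n := by
    intro e e' hdvd
    exact digits_unique ℓ ℓ 1 le_rfl (by omega) _ _ (hDiglt e) (hDiglt e') hdvd
  -- existence
  have hG0 : (X : (ZMod p)[X]) ^ 1 ∣ f.reverse - 1 := by
    rw [pow_one, Polynomial.X_dvd_iff, Polynomial.coeff_sub, Polynomial.coeff_zero_reverse,
      hf.leadingCoeff, Polynomial.coeff_one, if_pos rfl, sub_self]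
  obtain ⟨c, hclt, hcsupp, hcdvd⟩ := digits_exist ℓ ℓ 1 le_rfl (by omega) f.reverse hG0
  set E : ℕ → ℕ :=
    fun j => if j ∈ S then ∑ k ∈ Finset.range (s j), c (j * p ^ k) * p ^ k else 0 with hE
  have hEsupp : ∀ j, j ∉ S → E j = 0 := fun j hj => by rw [hE]; simp [hj]
  have hElt : ∀ j ∈ S, E j < p ^ s j := by
    intro j hj
    rw [hE]; dsimp only; rw [if_pos hj]
    exact sum_digits_lt hp1 (s j) _ (fun k => hclt _)
  have hEprod : (∏ n ∈ Finset.Icc 1 ℓ, ((1 : (ZMod p)[X]) + X ^ n) ^ c n)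
      = ∏ j ∈ S, ((1 : (ZMod p)[X]) + X ^ j) ^ E j := by
    rw [prod_eq ℓ s hchar]
    refine Finset.prod_congr rfl fun j hj => by rw [hE]; dsimp only; rw [if_pos hj]
  have hEequiv : TypeIIEquiv ℓ f (∏ j ∈ S, ((X : (ZMod p)[X]) ^ j + 1) ^ E j) := by
    show (X : (ZMod p)[X]) ^ (ℓ + 1) ∣ _
    rw [hrev E, ← hEprod]
    exact hcdvd
  refine ⟨E, ⟨hEsupp, hElt, hEequiv⟩, ?_⟩
  -- uniqueness
  rintro e' ⟨hsupp', hlt', hdvd'⟩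
  have hPP : (X : (ZMod p)[X]) ^ (ℓ + 1) ∣
      (∏ n ∈ Finset.Icc 1 ℓ, ((1 : (ZMod p)[X]) + X ^ n) ^ Dig e' n) -
      (∏ n ∈ Finset.Icc 1 ℓ, ((1 : (ZMod p)[X]) + X ^ n) ^ Dig E n) := by
    rw [hbridge e' hlt', hbridge E hElt]
    have h1 := hdvd'
    have h2 := hEequiv
    rw [TypeIIEquiv, hrev] at h1 h2
    have := dvd_sub h2 h1
    rwa [sub_sub_sub_cancel_left] at this
  have hdig := hdigeq e' E hPP
  funext j
  by_cases hjS : j ∈ S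
  · obtain ⟨hjIcc, hjnd⟩ := Finset.mem_filter.1 hjS
    have hj0 : j ≠ 0 := by have := (Finset.mem_Icc.1 hjIcc).1; omega
    have hmem : ∀ k, k < s j → j * p ^ k ∈ Finset.Icc 1 ℓ := by
      intro k hk
      rw [Finset.mem_Icc]
      refine ⟨?_, (hchar j hjS k).1 hk⟩
      exact Nat.one_le_iff_ne_zero.2 (Nat.mul_ne_zero hj0 (pow_ne_zero _ hp.pos.ne'))
    have hd : ∀ e : ℕ → ℕ, ∀ k, Dig e (j * p ^ k) = e j / p ^ k % p := by
      intro e k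
      obtain ⟨h1, h2⟩ := ord_facts hp hj0 hjnd k
      rw [hDig]; dsimp only
      rw [h1, Nat.mul_div_cancel _ (pow_pos hp.pos _)]
    calc e' j = ∑ k ∈ Finset.range (s j), (e' j / p ^ k % p) * p ^ k :=
          (sum_digits_eq hp1 (s j) (e' j) (hlt' j hjS)).symm
      _ = ∑ k ∈ Finset.range (s j), (E j / p ^ k % p) * p ^ k := by
          refine Finset.sum_congr rfl fun k hk => ?_
          rw [Finset.mem_range] at hk
          rw [← hd e' k, ← hd E k, hdig _ (hmem k hk)]
      _ = E j := sum_digits_eq hp1 (s j) (E j) (hElt j hjS)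
  · rw [hsupp' j hjS, hEsupp j hjS]
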